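/- arXiv:math/0510518 — 2 statements merged into one kernel-verified Lean document; each statement's English description precedes it below -/
import Mathlib

section
/- Projection theorem for capacities (upper bound direction): Let f: ℝⁿ → [0,∞] be Borel measurable, 1 ≤ m < n, and F ⊂ ℝ^{n-m} compact. Let λ_m be normalized Lebesgue measure on [0,1]^m. Then for every probability measure μ on F, the f-energy of the product measure λ_m × μ equals the (Π_m f)-energy of μ, where (Π_m f)(x) := ∬_{[0,1]^m×[0,1]^m} f(x, y - z) dy dz. Consequently Cap_{Π_m f}(F) ≤ Cap_f([0,1]^m × F). -/
open MeasureTheory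
open scoped ENNReal

/-- The `f`-energy `I_f(μ) := ∬ f(x - y) μ(dx) μ(dy)`. -/
noncomputable def energyK {α : Type*} [MeasurableSpace α] [Sub α]
    (f : α → ℝ≥0∞) (μ : Measure α) : ℝ≥0∞ :=
  ∫⁻ x, ∫⁻ y, f (x - y) ∂μ ∂μ

/-- The `f`-capacity `Cap_f(A) := [inf_{μ ∈ P(A)} I_f(μ)]⁻¹`, with `inf ∅ = ∞`, `1/∞ = 0`. -/
noncomputable def capK {α : Type*} [MeasurableSpace α] [Sub α]
    (f : α → ℝ≥0∞) (A : Set α) : ℝ≥0∞ :=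
  (⨅ (μ : Measure α) (_ : IsProbabilityMeasure μ) (_ : μ Aᶜ = 0), energyK f μ)⁻¹


lemma energy_prod_eq {α β : Type*} [MeasurableSpace α] [MeasurableSpace β]
    [Sub α] [Sub β] [MeasurableSub₂ α] [MeasurableSub₂ β]
    (ν : Measure α) (μ : Measure β) [SFinite ν] [SFinite μ]
    (f : α × β → ℝ≥0∞) (hf : Measurable f) :
    energyK f (ν.prod μ) = ∫⁻ x, ∫⁻ x', ∫⁻ y, ∫⁻ z, f (y - z, x - x') ∂ν ∂ν ∂μ ∂μ := by
  have hsub2 : Measurable fun p : (α × β) × (α × β) => p.1 - p.2 := by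
    have he : (fun p : (α × β) × (α × β) => p.1 - p.2)
        = fun p => (p.1.1 - p.2.1, p.1.2 - p.2.2) := by
      funext p; rw [Prod.sub_def]
    rw [he]
    exact (measurable_fst.fst.sub measurable_snd.fst).prodMk
      (measurable_fst.snd.sub measurable_snd.snd)
  have hsub : Measurable fun p : (α × β) × (α × β) => f (p.1 - p.2) := hf.comp hsub2
  have h1 : ∀ p : α × β, ∫⁻ q, f (p - q) ∂(ν.prod μ)
      = ∫⁻ z, ∫⁻ w, f (p.1 - z, p.2 - w) ∂μ ∂ν := by
    intro p
    rw [MeasureTheory.lintegral_prod (fun q => f (p - q))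
      ((hsub.comp measurable_prodMk_left).aemeasurable)]
    simp only [Prod.sub_def]
  unfold energyK
  simp only [h1]
  have m3 : Measurable fun p : α × β => ∫⁻ z, ∫⁻ w, f (p.1 - z, p.2 - w) ∂μ ∂ν := by
    apply Measurable.lintegral_prod_right'
      (f := fun r : (α × β) × α => ∫⁻ w, f (r.1.1 - r.2, r.1.2 - w) ∂μ)
    apply Measurable.lintegral_prod_right'
      (f := fun r : ((α × β) × α) × β => f (r.1.1.1 - r.1.2, r.1.1.2 - r.2))
    exact hf.comp ((measurable_fst.fst.fst.sub measurable_fst.snd).prodMk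
      (measurable_fst.fst.snd.sub measurable_snd))
  rw [MeasureTheory.lintegral_prod _ m3.aemeasurable]
  have stepA : ∀ (y : α) (x : β), ∫⁻ z, ∫⁻ w, f (y - z, x - w) ∂μ ∂ν
      = ∫⁻ w, ∫⁻ z, f (y - z, x - w) ∂ν ∂μ := fun y x =>
    lintegral_lintegral_swap
      ((hf.comp ((measurable_const.sub measurable_fst).prodMk
        (measurable_const.sub measurable_snd))).aemeasurable)
  simp only [stepA]
  have mB : Measurable fun p : α × β => ∫⁻ w, ∫⁻ z, f (p.1 - z, p.2 - w) ∂ν ∂μ := by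
    apply Measurable.lintegral_prod_right'
      (f := fun r : (α × β) × β => ∫⁻ z, f (r.1.1 - z, r.1.2 - r.2) ∂ν)
    apply Measurable.lintegral_prod_right'
      (f := fun r : ((α × β) × β) × α => f (r.1.1.1 - r.2, r.1.1.2 - r.1.2))
    exact hf.comp ((measurable_fst.fst.fst.sub measurable_snd).prodMk
      (measurable_fst.fst.snd.sub measurable_fst.snd))
  rw [lintegral_lintegral_swap mB.aemeasurable]
  refine lintegral_congr fun x => ?_
  have mC : Measurable fun p : α × β => ∫⁻ z, f (p.1 - z, x - p.2) ∂ν := by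
    apply Measurable.lintegral_prod_right'
      (f := fun r : (α × β) × α => f (r.1.1 - r.2, x - r.1.2))
    exact hf.comp ((measurable_fst.fst.sub measurable_snd).prodMk
      (measurable_const.sub measurable_fst.snd))
  exact lintegral_lintegral_swap mC.aemeasurable

/-- Projection theorem for capacities (upper-bound direction): with `λ_m` normalized
Lebesgue measure on `[0,1]^m` and `(Π_m f)(x) := ∬_{[0,1]^m×[0,1]^m} f(y - z, x) dy dz`,
for every probability measure `μ` on the compact set `F`, the `f`-energy of `λ_m × μ`
equals the `(Π_m f)`-energy of `μ`; consequently `Cap_{Π_m f}(F) ≤ Cap_f([0,1]^m × F)`. -/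
theorem stmt_7 (m k : ℕ) (hm : 1 ≤ m)
    (f : (Fin m → ℝ) × (Fin k → ℝ) → ℝ≥0∞) (hf : Measurable f)
    (F : Set (Fin k → ℝ)) (hF : IsCompact F) :
    (∀ μ : Measure (Fin k → ℝ), IsProbabilityMeasure μ → μ Fᶜ = 0 →
      energyK f ((Measure.pi fun _ : Fin m => volume.restrict (Set.Icc (0:ℝ) 1)).prod μ)
        = energyK (fun x : Fin k → ℝ =>
            ∫⁻ y, ∫⁻ z, f (y - z, x)
              ∂(Measure.pi fun _ : Fin m => volume.restrict (Set.Icc (0:ℝ) 1))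
              ∂(Measure.pi fun _ : Fin m => volume.restrict (Set.Icc (0:ℝ) 1))) μ) ∧
    capK (fun x : Fin k → ℝ =>
        ∫⁻ y, ∫⁻ z, f (y - z, x)
          ∂(Measure.pi fun _ : Fin m => volume.restrict (Set.Icc (0:ℝ) 1))
          ∂(Measure.pi fun _ : Fin m => volume.restrict (Set.Icc (0:ℝ) 1))) F
      ≤ capK f ((Set.univ.pi fun _ : Fin m => Set.Icc (0:ℝ) 1) ×ˢ F) := by
  set ν : Measure (Fin m → ℝ) :=
    Measure.pi fun _ : Fin m => volume.restrict (Set.Icc (0:ℝ) 1) with hνdef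
  haveI : IsProbabilityMeasure ((volume : Measure ℝ).restrict (Set.Icc (0:ℝ) 1)) :=
    ⟨by simp⟩
  haveI hνp : IsProbabilityMeasure ν := by rw [hνdef]; infer_instance
  have key : ∀ μ : Measure (Fin k → ℝ), IsProbabilityMeasure μ → μ Fᶜ = 0 →
      energyK f (ν.prod μ)
        = energyK (fun x : Fin k → ℝ => ∫⁻ y, ∫⁻ z, f (y - z, x) ∂ν ∂ν) μ := by
    intro μ hμ _
    haveI := hμ
    have := energy_prod_eq ν μ f hf
    rw [this]
    rfl
  refine ⟨key, ?_⟩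
  unfold capK
  rw [ENNReal.inv_le_inv]
  refine le_iInf fun μ => le_iInf fun hμ => le_iInf fun hc => ?_
  haveI := hμ
  have hB : MeasurableSet (Set.univ.pi fun _ : Fin m => Set.Icc (0:ℝ) 1) :=
    MeasurableSet.univ_pi fun _ => measurableSet_Icc
  have hνB : ν ((Set.univ.pi fun _ : Fin m => Set.Icc (0:ℝ) 1)ᶜ) = 0 := by
    rw [prob_compl_eq_zero_iff hB, hνdef, Measure.pi_pi]
    simp [Measure.restrict_apply, Real.volume_Icc]
  have hnull : (ν.prod μ) (((Set.univ.pi fun _ : Fin m => Set.Icc (0:ℝ) 1) ×ˢ F)ᶜ) = 0 := by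
    rw [Set.compl_prod_eq_union]
    refine measure_union_null ?_ ?_
    · rw [Measure.prod_prod, hνB, zero_mul]
    · rw [Measure.prod_prod, hc, mul_zero]
  refine iInf_le_of_le (ν.prod μ) (iInf_le_of_le inferInstance (iInf_le_of_le hnull ?_))
  exact (key μ hμ hc).le
end

section
/- Minkowski dimension via an integral of the packing number: For a nonempty bounded set F ⊂ ℝ, the upper Minkowski dimension satisfies dim_M F = inf{ q ∈ ℝ : ∫₁^∞ K_F(1/s) s^{-1-q} ds < ∞ }, where K_F(ε) is the maximal number of ε-separated points of F and dim_M F := limsup_{n→∞} log M_n(F)/log n with M_n(F) the number of intervals [i/n,(i+1)/n) meeting F. -/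
open Filter MeasureTheory

/-- The Minkowski content of `F` at scale `1/n`. -/
noncomputable def Mink (F : Set ℝ) (n : ℕ) : ℕ :=
  Nat.card {i : ℤ // (F ∩ Set.Ico ((i : ℝ) / n) (((i : ℝ) + 1) / n)).Nonempty}

/-- The Kolmogorov entropy (packing number) of `F`. -/
noncomputable def Kol (F : Set ℝ) (ε : ℝ) : ℕ :=
  sSup {K : ℕ | ∃ x : Fin K → ℝ, (∀ i, x i ∈ F) ∧ ∀ i j, i ≠ j → ε ≤ |x i - x j|}

namespace Stmt18

def kolSet (F : Set ℝ) (ε : ℝ) : Set ℕ :=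
  {K | ∃ x : Fin K → ℝ, (∀ i, x i ∈ F) ∧ ∀ i j, i ≠ j → ε ≤ |x i - x j|}

lemma kol_eq (F : Set ℝ) (ε : ℝ) : Kol F ε = sSup (kolSet F ε) := rfl

variable {F : Set ℝ} {R : ℝ}

lemma one_mem_kolSet (hne : F.Nonempty) (ε : ℝ) : 1 ∈ kolSet F ε := by
  obtain ⟨x₀, hx₀⟩ := hne
  exact ⟨fun _ => x₀, fun _ => hx₀, fun i j hij => absurd (Subsingleton.elim i j) hij⟩

lemma kolSet_le (hR0 : 0 ≤ R) (hR : ∀ x ∈ F, |x| ≤ R) {ε : ℝ} (hε : 0 < ε) {K : ℕ}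
    (hK : K ∈ kolSet F ε) : (K : ℝ) ≤ 2 * R / ε + 2 := by
  obtain ⟨x, hxF, hsep⟩ := hK
  have hinj : Function.Injective (fun i => ⌊x i / ε⌋) := by
    intro i j hij
    by_contra hne
    have h1 := hsep i j hne
    have h2 : |x i / ε - x j / ε| < 1 := by
      simp only at hij
      have hi := Int.floor_le (x i / ε)
      have hi' := Int.lt_floor_add_one (x i / ε)
      have hj := Int.floor_le (x j / ε)
      have hj' := Int.lt_floor_add_one (x j / ε)
      rw [abs_sub_lt_iff]; constructor <;> [skip; skip] <;> rw [hij] at * <;> linarith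
    rw [abs_sub_lt_iff] at h2
    have e1 : x i / ε - x j / ε = (x i - x j) / ε := by ring
    have e2 : x j / ε - x i / ε = (x j - x i) / ε := by ring
    rw [e1, e2] at h2
    have c1 : x i - x j < ε := (div_lt_one hε).mp h2.1
    have c2 : x j - x i < ε := (div_lt_one hε).mp h2.2
    have : |x i - x j| < ε := abs_sub_lt_iff.mpr ⟨c1, c2⟩
    linarith
  have hmap : ∀ i, ⌊x i / ε⌋ ∈ Finset.Icc ⌊-R / ε⌋ ⌊R / ε⌋ := by
    intro i
    have h := hR (x i) (hxF i)
    rw [abs_le] at h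
    refine Finset.mem_Icc.mpr ⟨Int.floor_le_floor ?_, Int.floor_le_floor ?_⟩ <;> gcongr
    · exact h.1
    · exact h.2
  have hcard : K ≤ (Finset.Icc ⌊-R / ε⌋ ⌊R / ε⌋).card := by
    have := Finset.card_le_card_of_injOn (s := Finset.univ) (fun i => ⌊x i / ε⌋)
      (fun i _ => hmap i) (hinj.injOn)
    simpa using this
  have hc2 : ((Finset.Icc ⌊-R / ε⌋ ⌊R / ε⌋).card : ℝ) ≤ 2 * R / ε + 2 := by
    rw [Int.card_Icc]
    have h1 : (⌊R / ε⌋ : ℝ) ≤ R / ε := Int.floor_le _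
    have h2 : -R / ε - 1 ≤ (⌊-R / ε⌋ : ℝ) := by
      have := Int.lt_floor_add_one (-R / ε); linarith
    rcases le_or_gt (⌊R / ε⌋ + 1 - ⌊-R / ε⌋) 0 with h | h
    · rw [Int.toNat_of_nonpos h]; simp; positivity
    · have hkey : ((⌊R / ε⌋ + 1 - ⌊-R / ε⌋).toNat : ℝ) = (⌊R / ε⌋ : ℝ) + 1 - ⌊-R / ε⌋ := by
        rw [← Int.cast_natCast, Int.toNat_of_nonneg h.le]; push_cast; ring
      rw [hkey]
      have e3 : -R/ε = -(R/ε) := by ring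
      have e4 : 2*R/ε = R/ε + R/ε := by ring
      linarith
  exact le_trans (Nat.cast_le.mpr hcard) hc2

lemma bddAbove_kolSet (hR0 : 0 ≤ R) (hR : ∀ x ∈ F, |x| ≤ R) {ε : ℝ} (hε : 0 < ε) :
    BddAbove (kolSet F ε) := by
  refine ⟨⌊2 * R / ε + 2⌋₊, fun K hK => ?_⟩
  exact Nat.le_floor (kolSet_le hR0 hR hε hK)

lemma kol_mono (hne : F.Nonempty) (hR0 : 0 ≤ R) (hR : ∀ x ∈ F, |x| ≤ R)
    {ε ε' : ℝ} (h0 : 0 < ε') (h : ε' ≤ ε) : Kol F ε ≤ Kol F ε' := by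
  rw [kol_eq, kol_eq]
  refine csSup_le_csSup (bddAbove_kolSet hR0 hR h0) ⟨1, one_mem_kolSet hne ε⟩ ?_
  rintro K ⟨x, hxF, hsep⟩
  exact ⟨x, hxF, fun i j hij => le_trans h (hsep i j hij)⟩

lemma one_le_kol (hne : F.Nonempty) (hR0 : 0 ≤ R) (hR : ∀ x ∈ F, |x| ≤ R)
    {ε : ℝ} (hε : 0 < ε) : 1 ≤ Kol F ε :=
  le_csSup (bddAbove_kolSet hR0 hR hε) (one_mem_kolSet hne ε)

lemma kol_mem (hne : F.Nonempty) (hR0 : 0 ≤ R) (hR : ∀ x ∈ F, |x| ≤ R)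
    {ε : ℝ} (hε : 0 < ε) : Kol F ε ∈ kolSet F ε := by
  rw [kol_eq]
  exact Nat.sSup_mem ⟨1, one_mem_kolSet hne ε⟩ (bddAbove_kolSet hR0 hR hε)

lemma le_kol (hR0 : 0 ≤ R) (hR : ∀ x ∈ F, |x| ≤ R) {ε : ℝ} (hε : 0 < ε)
    {K : ℕ} (hK : K ∈ kolSet F ε) : K ≤ Kol F ε :=
  le_csSup (bddAbove_kolSet hR0 hR hε) hK

lemma kol_real_le (hne : F.Nonempty) (hR0 : 0 ≤ R) (hR : ∀ x ∈ F, |x| ≤ R)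
    {ε : ℝ} (hε : 0 < ε) : (Kol F ε : ℝ) ≤ 2 * R / ε + 2 :=
  kolSet_le hR0 hR hε (kol_mem hne hR0 hR hε)

def minkSet (F : Set ℝ) (n : ℕ) : Set ℤ :=
  {i : ℤ | (F ∩ Set.Ico ((i : ℝ) / n) (((i : ℝ) + 1) / n)).Nonempty}

lemma mink_eq (F : Set ℝ) (n : ℕ) : Mink F n = (minkSet F n).ncard := by
  rw [← Nat.card_coe_set_eq]; rfl

lemma minkSet_finite (hR : ∀ x ∈ F, |x| ≤ R) {n : ℕ} (hn : 1 ≤ n) :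
    (minkSet F n).Finite := by
  have hn' : (0:ℝ) < n := by exact_mod_cast hn
  refine Set.Finite.subset (Set.finite_Icc (⌈-(R*n)⌉ - 1) ⌊R*n⌋) ?_
  rintro i ⟨y, hyF, hy1, hy2⟩
  have hy := hR y hyF
  rw [abs_le] at hy
  have hl : (i:ℝ) ≤ y * n := (div_le_iff₀ hn').mp hy1
  have hu : y * n < (i:ℝ) + 1 := (lt_div_iff₀ hn').mp hy2
  have hyn1 : y * n ≤ R * n := by nlinarith [hy.2]
  have hyn2 : -(R*n) ≤ y * n := by nlinarith [hy.1]
  constructor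
  · have : (⌈-(R*n)⌉ : ℤ) ≤ i + 1 := by rw [Int.ceil_le]; push_cast; linarith
    omega
  · rw [Int.le_floor]; push_cast; linarith

lemma sep_of_far {n : ℕ} (hn : 1 ≤ n) {i j : ℤ} {a b : ℝ}
    (ha : a ∈ Set.Ico ((i : ℝ) / n) (((i : ℝ) + 1) / n))
    (hb : b ∈ Set.Ico ((j : ℝ) / n) (((j : ℝ) + 1) / n))
    (hij : 2 ≤ |i - j|) : 1 / (n:ℝ) ≤ |a - b| := by
  have hn' : (0:ℝ) < n := by exact_mod_cast hn
  rcases abs_cases ((i:ℤ) - j) with ⟨he, _⟩ | ⟨he, _⟩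
  · -- i - j = |i-j| ≥ 2, so i ≥ j + 2
    have hij' : j + 2 ≤ i := by omega
    have hc : ((j:ℝ) + 2) ≤ i := by exact_mod_cast hij'
    have : a - b > 1 / n := by
      have h1 : a ≥ (i:ℝ)/n := ha.1
      have h2 : b < ((j:ℝ)+1)/n := hb.2
      have : ((j:ℝ)+2)/n ≤ (i:ℝ)/n := by gcongr
      have hd : ((j:ℝ)+2)/n - ((j:ℝ)+1)/n = 1/n := by field_simp; ring
      linarith
    exact le_trans this.le (le_abs_self _)
  · have hij' : i + 2 ≤ j := by omega
    have hc : ((i:ℝ) + 2) ≤ j := by exact_mod_cast hij'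
    have : b - a > 1 / n := by
      have h1 : b ≥ (j:ℝ)/n := hb.1
      have h2 : a < ((i:ℝ)+1)/n := ha.2
      have : ((i:ℝ)+2)/n ≤ (j:ℝ)/n := by gcongr
      have hd : ((i:ℝ)+2)/n - ((i:ℝ)+1)/n = 1/n := by field_simp; ring
      linarith
    exact abs_sub_comm a b ▸ le_trans this.le (le_abs_self _)

lemma kol_le_mink (hne : F.Nonempty) (hR0 : 0 ≤ R) (hR : ∀ x ∈ F, |x| ≤ R)
    {n : ℕ} (hn : 1 ≤ n) : Kol F (1 / n) ≤ Mink F n := by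
  have hn' : (0:ℝ) < n := by exact_mod_cast hn
  have hε : (0:ℝ) < 1 / n := by positivity
  obtain ⟨x, hxF, hsep⟩ := kol_mem hne hR0 hR hε
  haveI : Finite (minkSet F n) := (minkSet_finite hR hn).to_subtype
  have key : ∀ i : Fin (Kol F (1/(n:ℝ))), ⌊x i * n⌋ ∈ minkSet F n := by
    intro i
    refine ⟨x i, hxF i, ?_, ?_⟩
    · rw [div_le_iff₀ hn']; exact Int.floor_le _
    · rw [lt_div_iff₀ hn']; exact_mod_cast Int.lt_floor_add_one (x i * n)
  have hinj : Function.Injective (fun i => (⟨⌊x i * n⌋, key i⟩ : minkSet F n)) := by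
    intro i j hij
    by_contra hne'
    have h1 := hsep i j hne'
    have h2 : (⌊x i * n⌋ : ℤ) = ⌊x j * n⌋ := congrArg Subtype.val hij
    have hfi := Int.floor_le (x i * n)
    have hfi' := Int.lt_floor_add_one (x i * n)
    have hfj := Int.floor_le (x j * n)
    have hfj' := Int.lt_floor_add_one (x j * n)
    rw [h2] at hfi hfi'
    have habs : |x i * n - x j * n| < 1 := by rw [abs_sub_lt_iff]; constructor <;> linarith
    have hlt : |x i - x j| * n < 1 := by
      rw [← abs_of_pos hn', ← abs_mul]; rw [sub_mul]; exact habs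
    have hge : 1 ≤ |x i - x j| * n := (div_le_iff₀ hn').mp h1
    linarith
  have := Nat.card_le_card_of_injective _ hinj
  simpa [Mink, Nat.card_coe_set_eq, ← mink_eq] using this

lemma sep_ncard_le_kol (hne : F.Nonempty) (hR0 : 0 ≤ R) (hR : ∀ x ∈ F, |x| ≤ R)
    {n : ℕ} (hn : 1 ≤ n) {T : Set ℤ} (hT : T ⊆ minkSet F n) (hTfin : T.Finite)
    (hsep : ∀ i ∈ T, ∀ j ∈ T, i ≠ j → 2 ≤ |i - j|) :
    T.ncard ≤ Kol F (1 / n) := by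
  haveI := hTfin.fintype
  have hc : T.ncard = Fintype.card T := by
    rw [← Nat.card_coe_set_eq, Nat.card_eq_fintype_card]
  refine le_kol hR0 hR (by positivity) ?_
  rw [hc]
  set e := (Fintype.equivFin T).symm
  have hpt : ∀ t : T, ∃ y, y ∈ F ∩ Set.Ico ((t.1 : ℝ) / n) (((t.1 : ℝ) + 1) / n) :=
    fun t => hT t.2
  choose y hy using hpt
  refine ⟨fun i => y (e i), fun i => (hy (e i)).1, fun i j hij => ?_⟩
  have hne' : (e i).1 ≠ (e j).1 := by
    intro h
    exact hij (e.injective (Subtype.ext h))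
  exact sep_of_far hn (hy (e i)).2 (hy (e j)).2
    (hsep _ (e i).2 _ (e j).2 hne')

lemma mink_le_two_kol (hne : F.Nonempty) (hR0 : 0 ≤ R) (hR : ∀ x ∈ F, |x| ≤ R)
    {n : ℕ} (hn : 1 ≤ n) : Mink F n ≤ 2 * Kol F (1 / n) := by
  have hfin := minkSet_finite hR hn
  set S := minkSet F n
  set Se := {i ∈ S | i % 2 = 0}
  set So := {i ∈ S | i % 2 ≠ 0}
  have hunion : Se ∪ So = S := by
    ext i; simp only [Se, So, Set.mem_union, Set.mem_setOf_eq]; tauto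
  have hdisj : Disjoint Se So := by
    rw [Set.disjoint_left]; rintro i ⟨_, h0⟩ ⟨_, h1⟩; exact h1 h0
  have hSe : Se ⊆ S := fun i hi => hi.1
  have hSo : So ⊆ S := fun i hi => hi.1
  have hsplit : S.ncard = Se.ncard + So.ncard := by
    rw [← hunion, Set.ncard_union_eq hdisj (hfin.subset hSe) (hfin.subset hSo)]
  have hsep : ∀ (T : Set ℤ) (r : ℤ), (∀ i ∈ T, i % 2 = r) → ∀ i ∈ T, ∀ j ∈ T, i ≠ j → 2 ≤ |i - j| := by
    intro T r hr i hi j hj hij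
    have : i % 2 = j % 2 := by rw [hr i hi, hr j hj]
    have hdvd : (2:ℤ) ∣ i - j := Int.ModEq.dvd (this.symm : j % 2 = i % 2)
    have hnz : i - j ≠ 0 := sub_ne_zero.mpr hij
    exact Int.le_of_dvd (abs_pos.mpr hnz) ((dvd_abs 2 (i-j)).mpr hdvd)
  have he : Se.ncard ≤ Kol F (1/(n:ℝ)) :=
    sep_ncard_le_kol hne hR0 hR hn hSe (hfin.subset hSe) (hsep Se 0 (fun i hi => hi.2))
  have ho : So.ncard ≤ Kol F (1/(n:ℝ)) :=
    sep_ncard_le_kol hne hR0 hR hn hSo (hfin.subset hSo)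
      (hsep So 1 (fun i hi => (Int.emod_two_eq_zero_or_one i).resolve_left hi.2))
  have hms : (minkSet F n).ncard = Se.ncard + So.ncard := hsplit
  rw [mink_eq, hms]
  omega

lemma kol_inv_max_monotone (hne : F.Nonempty) (hR0 : 0 ≤ R) (hR : ∀ x ∈ F, |x| ≤ R) :
    Monotone fun s : ℝ => ((Kol F (1 / max s 1) : ℝ)) := by
  intro a b hab
  have h1 : (0:ℝ) < max a 1 := lt_of_lt_of_le one_pos (le_max_right _ _)
  have h2 : (0:ℝ) < max b 1 := lt_of_lt_of_le one_pos (le_max_right _ _)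
  have hle : 1 / max b 1 ≤ 1 / max a 1 :=
    one_div_le_one_div_of_le h1 (max_le_max hab le_rfl)
  exact Nat.cast_le.mpr (kol_mono hne hR0 hR (by positivity) hle)

lemma aesm_integrand (hne : F.Nonempty) (hR0 : 0 ≤ R) (hR : ∀ x ∈ F, |x| ≤ R) (q : ℝ) :
    AEStronglyMeasurable (fun s : ℝ => (Kol F (1/s) : ℝ) * s ^ (-1-q))
      (volume.restrict (Set.Ioi (1:ℝ))) := by
  have hm1 : AEStronglyMeasurable (fun s : ℝ => (Kol F (1/s) : ℝ))
      (volume.restrict (Set.Ioi (1:ℝ))) := by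
    refine ((kol_inv_max_monotone hne hR0 hR).measurable.aestronglyMeasurable).congr ?_
    filter_upwards [ae_restrict_mem measurableSet_Ioi] with s hs
    rw [max_eq_left (le_of_lt hs)]
  have hm2 : AEStronglyMeasurable (fun s : ℝ => s ^ (-1-q))
      (volume.restrict (Set.Ioi (1:ℝ))) := by
    refine ContinuousOn.aestronglyMeasurable ?_ measurableSet_Ioi
    intro s hs
    exact (Real.continuousAt_rpow_const s _
      (Or.inl (ne_of_gt (lt_trans one_pos hs)))).continuousWithinAt
  exact hm1.mul hm2

lemma integrable_of_poly_bound (hne : F.Nonempty) (hR0 : 0 ≤ R) (hR : ∀ x ∈ F, |x| ≤ R)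
    {q q' : ℝ} (hq'0 : 0 ≤ q') (hlt : q' < q) {N : ℕ} (hN : 2 ≤ N)
    (hbound : ∀ n : ℕ, N ≤ n → (Mink F n : ℝ) ≤ (n:ℝ) ^ q') :
    IntegrableOn (fun s : ℝ => (Kol F (1/s) : ℝ) * s ^ (-1-q)) (Set.Ioi 1) := by
  have haesm := aesm_integrand hne hR0 hR q
  have hT : (1:ℝ) ≤ N := by exact_mod_cast le_trans one_le_two hN
  have hN0 : (0:ℝ) < N := lt_of_lt_of_le one_pos hT
  have hsplit : Set.Ioc (1:ℝ) N ∪ Set.Ioi (N:ℝ) = Set.Ioi (1:ℝ) := Set.Ioc_union_Ioi_eq_Ioi hT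
  rw [← hsplit]
  refine IntegrableOn.union ?_ ?_
  · -- head piece
    refine ⟨haesm.mono_measure (Measure.restrict_mono (fun s hs => hs.1) le_rfl), ?_⟩
    refine HasFiniteIntegral.restrict_of_bounded
      (C := (Kol F (1/(N:ℝ)) : ℝ) * max ((N:ℝ) ^ (-1-q)) 1) measure_Ioc_lt_top ?_
    filter_upwards [ae_restrict_mem measurableSet_Ioc] with s hs
    have hs0 : (0:ℝ) < s := lt_trans one_pos hs.1
    have hnn : (0:ℝ) ≤ (Kol F (1/s) : ℝ) * s ^ (-1-q) :=
      mul_nonneg (Nat.cast_nonneg _) (Real.rpow_nonneg hs0.le _)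
    rw [Real.norm_eq_abs, abs_of_nonneg hnn]
    refine mul_le_mul ?_ ?_ (Real.rpow_nonneg hs0.le _) (Nat.cast_nonneg _)
    · exact Nat.cast_le.mpr (kol_mono hne hR0 hR (by positivity)
        (one_div_le_one_div_of_le hs0 hs.2))
    · rcases le_or_gt 0 (-1-q) with he | he
      · exact le_max_of_le_left (Real.rpow_le_rpow hs0.le hs.2 he)
      · exact le_max_of_le_right (Real.rpow_le_one_of_one_le_of_nonpos hs.1.le he.le)
  · -- tail piece
    refine Integrable.mono (g := fun s : ℝ => (2:ℝ)^q' * s ^ (q'-1-q))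
      ((integrableOn_Ioi_rpow_of_lt (by linarith) hN0).const_mul _)
      (haesm.mono_measure (Measure.restrict_mono (Set.Ioi_subset_Ioi hT) le_rfl)) ?_
    filter_upwards [ae_restrict_mem measurableSet_Ioi] with s hs
    have hs1 : (1:ℝ) < s := lt_of_le_of_lt hT hs
    have hs0 : (0:ℝ) < s := lt_trans one_pos hs1
    set n := ⌈s⌉₊ with hn_def
    have hsn : s ≤ (n:ℝ) := Nat.le_ceil s
    have hNn : N ≤ n := le_of_lt (Nat.lt_ceil.mpr hs)
    have hn1 : 1 ≤ n := le_trans (le_trans one_le_two hN) hNn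
    have hn2s : (n:ℝ) ≤ 2*s := by
      have := Nat.ceil_lt_add_one hs0.le
      linarith
    have hchain : (Kol F (1/s) : ℝ) ≤ (2:ℝ)^q' * s ^ q' := by
      have c1 : Kol F (1/s) ≤ Kol F (1/(n:ℝ)) := by
        refine kol_mono hne hR0 hR (by positivity) ?_
        exact one_div_le_one_div_of_le hs0 hsn
      have c2 : Kol F (1/(n:ℝ)) ≤ Mink F n := kol_le_mink hne hR0 hR hn1
      have c3 : (Mink F n : ℝ) ≤ (n:ℝ) ^ q' := hbound n hNn
      have c4 : ((n:ℝ)) ^ q' ≤ (2*s) ^ q' :=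
        Real.rpow_le_rpow (Nat.cast_nonneg _) hn2s hq'0
      have c5 : ((2:ℝ)*s) ^ q' = 2^q' * s^q' := Real.mul_rpow (by norm_num) hs0.le
      calc (Kol F (1/s) : ℝ) ≤ (Mink F n : ℝ) := by exact_mod_cast le_trans c1 c2
        _ ≤ (n:ℝ) ^ q' := c3
        _ ≤ (2*s) ^ q' := c4
        _ = 2^q' * s^q' := c5
    have hnn : (0:ℝ) ≤ (Kol F (1/s) : ℝ) * s ^ (-1-q) :=
      mul_nonneg (Nat.cast_nonneg _) (Real.rpow_nonneg hs0.le _)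
    have hgnn : (0:ℝ) ≤ (2:ℝ)^q' * s ^ (q'-1-q) :=
      mul_nonneg (Real.rpow_nonneg (by norm_num) _) (Real.rpow_nonneg hs0.le _)
    rw [Real.norm_eq_abs, abs_of_nonneg hnn, Real.norm_eq_abs, abs_of_nonneg hgnn]
    calc (Kol F (1/s) : ℝ) * s ^ (-1-q) ≤ (2:ℝ)^q' * s^q' * s ^ (-1-q) := by
          exact mul_le_mul_of_nonneg_right hchain (Real.rpow_nonneg hs0.le _)
      _ = (2:ℝ)^q' * s ^ (q'-1-q) := by
          rw [mul_assoc, ← Real.rpow_add hs0]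
          ring_nf

lemma poly_bound_of_integrable (hne : F.Nonempty) (hR0 : 0 ≤ R) (hR : ∀ x ∈ F, |x| ≤ R)
    {q : ℝ}
    (hf : IntegrableOn (fun s : ℝ => (Kol F (1/s) : ℝ) * s ^ (-1-q)) (Set.Ioi 1)) :
    ∃ C : ℝ, 1 ≤ C ∧ ∀ n : ℕ, 2 ≤ n → (Mink F n : ℝ) ≤ C * (n:ℝ) ^ q := by
  set f : ℝ → ℝ := fun s => (Kol F (1/s) : ℝ) * s ^ (-1-q) with hf_def
  have hnonneg : 0 ≤ᵐ[volume.restrict (Set.Ioi (1:ℝ))] f := by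
    filter_upwards [ae_restrict_mem measurableSet_Ioi] with s hs
    exact mul_nonneg (Nat.cast_nonneg _) (Real.rpow_nonneg (le_of_lt (lt_trans one_pos hs)) _)
  set I := ∫ s in Set.Ioi (1:ℝ), f s with hI_def
  have hI0 : 0 ≤ I := setIntegral_nonneg measurableSet_Ioi
    (fun s hs => mul_nonneg (Nat.cast_nonneg _)
      (Real.rpow_nonneg (le_of_lt (lt_trans one_pos hs)) _))
  set c : ℝ := min 1 ((2:ℝ) ^ (-1-q)) with hc_def
  have hc : 0 < c := lt_min one_pos (Real.rpow_pos_of_pos two_pos _)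
  have key : ∀ n : ℕ, 2 ≤ n → (Kol F (1/(n:ℝ)) : ℝ) * (c * (n:ℝ) ^ (-q)) ≤ I := by
    intro n hn
    have hn0 : (0:ℝ) < n := by
      have : (2:ℝ) ≤ n := by exact_mod_cast hn
      linarith
    have hsub : Set.Ioc (n:ℝ) (2*n) ⊆ Set.Ioi 1 := by
      intro s hs
      have : (2:ℝ) ≤ n := by exact_mod_cast hn
      exact lt_of_lt_of_le (by linarith) hs.1.le
    have hfi : IntegrableOn f (Set.Ioc (n:ℝ) (2*n)) := hf.mono_set hsub
    set K := (Kol F (1/(n:ℝ)) : ℝ)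
    have hptwise : ∀ s ∈ Set.Ioc (n:ℝ) (2*n), K * (c * (n:ℝ) ^ (-1-q)) ≤ f s := by
      intro s hs
      have hs0 : (0:ℝ) < s := lt_trans hn0 hs.1
      have hKle : K ≤ (Kol F (1/s) : ℝ) :=
        Nat.cast_le.mpr (kol_mono hne hR0 hR (by positivity)
          (one_div_le_one_div_of_le hn0 hs.1.le))
      have hrle : c * (n:ℝ) ^ (-1-q) ≤ s ^ (-1-q) := by
        rcases le_or_gt 0 (-1-q) with he | he
        · have h1 : (n:ℝ) ^ (-1-q) ≤ s ^ (-1-q) := Real.rpow_le_rpow hn0.le hs.1.le he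
          have h2 : c ≤ 1 := min_le_left _ _
          nlinarith [Real.rpow_nonneg hn0.le (-1-q)]
        · have h1 : ((2:ℝ)*n) ^ (-1-q) ≤ s ^ (-1-q) :=
            Real.rpow_le_rpow_of_nonpos hs0 hs.2 he.le
          have h2 : ((2:ℝ)*n) ^ (-1-q) = 2^(-1-q) * (n:ℝ)^(-1-q) :=
            Real.mul_rpow (by norm_num) hn0.le
          have h3 : c ≤ (2:ℝ)^(-1-q) := min_le_right _ _
          nlinarith [Real.rpow_nonneg hn0.le (-1-q)]
      have hfs : K * (c * (n:ℝ) ^ (-1-q)) ≤ (Kol F (1/s) : ℝ) * s ^ (-1-q) := by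
        have hK0 : 0 ≤ K := Nat.cast_nonneg _
        have hr0 : 0 ≤ c * (n:ℝ) ^ (-1-q) :=
          mul_nonneg hc.le (Real.rpow_nonneg hn0.le _)
        exact mul_le_mul hKle hrle hr0 (Nat.cast_nonneg _)
      exact hfs
    have hconst : IntegrableOn (fun _ : ℝ => K * (c * (n:ℝ) ^ (-1-q)))
        (Set.Ioc (n:ℝ) (2*n)) :=
      integrableOn_const measure_Ioc_lt_top.ne
    have hint : ∫ s in Set.Ioc (n:ℝ) (2*n), K * (c * (n:ℝ) ^ (-1-q))
        ≤ ∫ s in Set.Ioc (n:ℝ) (2*n), f s :=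
      setIntegral_mono_on hconst hfi measurableSet_Ioc hptwise
    have hconstval : ∫ _ in Set.Ioc (n:ℝ) (2*n), K * (c * (n:ℝ) ^ (-1-q))
        = K * (c * (n:ℝ) ^ (-1-q)) * n := by
      rw [setIntegral_const, measureReal_def, Real.volume_Ioc, smul_eq_mul]
      rw [ENNReal.toReal_ofReal (by linarith)]
      ring
    have hle2 : ∫ s in Set.Ioc (n:ℝ) (2*n), f s ≤ I :=
      setIntegral_mono_set hf hnonneg (HasSubset.Subset.eventuallyLE hsub)
    have hcomb : K * (c * (n:ℝ) ^ (-1-q)) * n ≤ I := by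
      rw [← hconstval]; exact le_trans hint hle2
    have hr : (n:ℝ)^(-1-q) * (n:ℝ) = (n:ℝ)^(-q) := by
      nth_rewrite 2 [← Real.rpow_one (n:ℝ)]
      rw [← Real.rpow_add hn0]
      norm_num
      ring_nf
    calc K * (c * (n:ℝ) ^ (-q)) = K * (c * ((n:ℝ)^(-1-q) * n)) := by rw [hr]
      _ = K * (c * (n:ℝ) ^ (-1-q)) * n := by ring
      _ ≤ I := hcomb
  refine ⟨max 1 (2*I/c), le_max_left _ _, fun n hn => ?_⟩
  have hn0 : (0:ℝ) < n := by
    have : (2:ℝ) ≤ n := by exact_mod_cast hn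
    linarith
  have hnn : (n:ℝ)^(-q) * (n:ℝ)^q = 1 := by
    rw [← Real.rpow_add hn0]; norm_num
  have h1 := mul_le_mul_of_nonneg_right (key n hn) (Real.rpow_nonneg hn0.le q)
  have h2 : ((Kol F (1/(n:ℝ)) : ℝ)) * (c * (n:ℝ)^(-q)) * (n:ℝ)^q
      = (Kol F (1/(n:ℝ)) : ℝ) * c := by
    have : (c * (n:ℝ)^(-q)) * (n:ℝ)^q = c := by rw [mul_assoc, hnn, mul_one]
    rw [mul_assoc, this]
  rw [h2] at h1
  have hm : (Mink F n : ℝ) ≤ 2 * (Kol F (1/(n:ℝ)) : ℝ) := by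
    exact_mod_cast mink_le_two_kol hne hR0 hR (by omega : 1 ≤ n)
  have hfinal : (Mink F n : ℝ) ≤ 2*I/c * (n:ℝ)^q := by
    rw [div_mul_eq_mul_div, le_div_iff₀ hc]
    nlinarith [Nat.cast_nonneg (α := ℝ) (Kol F (1/(n:ℝ)))]
  calc (Mink F n : ℝ) ≤ 2*I/c * (n:ℝ)^q := hfinal
    _ ≤ max 1 (2*I/c) * (n:ℝ)^q :=
      mul_le_mul_of_nonneg_right (le_max_right _ _) (Real.rpow_nonneg hn0.le _)

lemma one_le_mink (hne : F.Nonempty) (hR0 : 0 ≤ R) (hR : ∀ x ∈ F, |x| ≤ R)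
    {n : ℕ} (hn : 1 ≤ n) : 1 ≤ Mink F n := by
  have hn0 : (0:ℝ) < n := by exact_mod_cast hn
  exact le_trans (one_le_kol hne hR0 hR (by positivity)) (kol_le_mink hne hR0 hR hn)

lemma ratio_nonneg_eventually (hne : F.Nonempty) (hR0 : 0 ≤ R) (hR : ∀ x ∈ F, |x| ≤ R) :
    ∀ᶠ n : ℕ in atTop, 0 ≤ Real.log (Mink F n) / Real.log n := by
  filter_upwards [eventually_ge_atTop 1] with n hn
  have h1 : (1:ℝ) ≤ Mink F n := by exact_mod_cast one_le_mink hne hR0 hR hn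
  have h2 : (1:ℝ) ≤ n := by exact_mod_cast hn
  exact div_nonneg (Real.log_nonneg h1) (Real.log_nonneg h2)

lemma ratio_upper_eventually (hne : F.Nonempty) (hR0 : 0 ≤ R) (hR : ∀ x ∈ F, |x| ≤ R) :
    ∀ᶠ n : ℕ in atTop, Real.log (Mink F n) / Real.log n ≤ Real.log (4*R+4) + 1 := by
  filter_upwards [eventually_ge_atTop 3] with n hn
  have hn1 : 1 ≤ n := by omega
  have hn0 : (0:ℝ) < n := by exact_mod_cast Nat.pos_of_ne_zero (by omega)
  have hn1' : (1:ℝ) ≤ n := by exact_mod_cast hn1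
  have hmb : (Mink F n : ℝ) ≤ (4*R+4) * n := by
    have h1 : (Mink F n : ℝ) ≤ 2 * (Kol F (1/(n:ℝ)) : ℝ) := by
      exact_mod_cast mink_le_two_kol hne hR0 hR hn1
    have h2 : (Kol F (1/(n:ℝ)) : ℝ) ≤ 2*R/(1/(n:ℝ)) + 2 :=
      kol_real_le hne hR0 hR (by positivity)
    have h3 : 2*R/(1/(n:ℝ)) = 2*R*n := by field_simp
    rw [h3] at h2
    nlinarith
  have hm1 : (1:ℝ) ≤ Mink F n := by exact_mod_cast one_le_mink hne hR0 hR hn1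
  have hlog : Real.log (Mink F n) ≤ Real.log (4*R+4) + Real.log n := by
    have := Real.log_le_log (by linarith) hmb
    rwa [Real.log_mul (by linarith) (ne_of_gt hn0)] at this
  have hlogn : 1 ≤ Real.log n := by
    rw [Real.le_log_iff_exp_le hn0]
    calc Real.exp 1 ≤ 2.7182818286 := Real.exp_one_lt_d9.le
      _ ≤ 3 := by norm_num
      _ ≤ n := by exact_mod_cast hn
  have hlogC : 0 ≤ Real.log (4*R+4) := Real.log_nonneg (by linarith)
  rw [div_le_iff₀ (by linarith : (0:ℝ) < Real.log n)]
  nlinarith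

end Stmt18

/-- Upper Minkowski dimension via an integral of the packing number: for nonempty bounded
`F ⊂ ℝ`, `dim_M F = limsup_n log M_n(F)/log n` equals
`inf{q ∈ ℝ : ∫₁^∞ K_F(1/s) s^{-1-q} ds < ∞}`. -/
theorem stmt_18 (F : Set ℝ) (hne : F.Nonempty) (hbd : Bornology.IsBounded F) :
    limsup (fun n : ℕ => Real.log (Mink F n) / Real.log n) atTop
      = sInf {q : ℝ |
          IntegrableOn (fun s : ℝ => (Kol F (1 / s) : ℝ) * s ^ (-1 - q)) (Set.Ioi 1)} := by

  obtain ⟨R₀, hR₀⟩ := isBounded_iff_forall_norm_le.mp hbd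
  set R := max R₀ 0 with hR_def
  have hR0 : 0 ≤ R := le_max_right _ _
  have hR : ∀ x ∈ F, |x| ≤ R := fun x hx =>
    le_trans (le_of_eq (Real.norm_eq_abs x).symm) (le_trans (hR₀ x hx) (le_max_left _ _))
  set u : ℕ → ℝ := fun n => Real.log (Mink F n) / Real.log n with hu
  set S := {q : ℝ |
      IntegrableOn (fun s : ℝ => (Kol F (1 / s) : ℝ) * s ^ (-1 - q)) (Set.Ioi 1)} with hS
  set d := limsup u atTop with hd
  have hub := Stmt18.ratio_upper_eventually hne hR0 hR
  have hlb := Stmt18.ratio_nonneg_eventually hne hR0 hR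
  have hbdd : IsBoundedUnder (· ≤ ·) atTop u := ⟨_, hub⟩
  have hcob : IsCoboundedUnder (· ≤ ·) atTop u :=
    isCoboundedUnder_le_of_eventually_le atTop hlb
  have hd0 : 0 ≤ d := le_limsup_of_frequently_le hlb.frequently hbdd
  have hSge : ∀ q ∈ S, d ≤ q := by
    intro q hq
    obtain ⟨C, hC1, hCb⟩ := Stmt18.poly_bound_of_integrable hne hR0 hR hq
    refine le_of_forall_pos_le_add ?_
    intro η hη
    refine limsup_le_of_le hcob ?_
    have htend : Tendsto (fun n : ℕ => Real.log C / Real.log n) atTop (nhds 0) :=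
      Tendsto.div_atTop tendsto_const_nhds
        (Real.tendsto_log_atTop.comp tendsto_natCast_atTop_atTop)
    filter_upwards [htend.eventually_le_const hη, eventually_ge_atTop 3] with n h1 h2
    have hn1 : 1 ≤ n := by omega
    have hn0 : (0:ℝ) < n := by exact_mod_cast Nat.pos_of_ne_zero (by omega)
    have hlogn : 0 < Real.log n := Real.log_pos (by exact_mod_cast (by omega : 2 ≤ n))
    have hm1 : (1:ℝ) ≤ Mink F n := by exact_mod_cast Stmt18.one_le_mink hne hR0 hR hn1
    have hb := hCb n (by omega)
    have hlog : Real.log (Mink F n) ≤ Real.log C + q * Real.log n := by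
      have := Real.log_le_log (by linarith) hb
      rwa [Real.log_mul (by linarith) (ne_of_gt (Real.rpow_pos_of_pos hn0 q)),
        Real.log_rpow hn0] at this
    have hkey : u n ≤ Real.log C / Real.log n + q := by
      have e : (Real.log C / Real.log n + q) * Real.log n
          = Real.log C + q * Real.log n := by field_simp
      show Real.log (Mink F n) / Real.log n ≤ _
      rw [div_le_iff₀ hlogn, e]
      exact hlog
    linarith
  have hSgt : ∀ q, d < q → q ∈ S := by
    intro q hq
    set q' := (d + q)/2 with hq'_def
    have hq'0 : 0 ≤ q' := by rw [hq'_def]; linarith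
    have hdq' : d < q' := by rw [hq'_def]; linarith
    have hq'q : q' < q := by rw [hq'_def]; linarith
    have hev : ∀ᶠ n : ℕ in atTop, u n < q' := eventually_lt_of_limsup_lt hdq' hbdd
    obtain ⟨N₀, hN₀⟩ := eventually_atTop.mp hev
    refine Stmt18.integrable_of_poly_bound hne hR0 hR hq'0 hq'q
      (N := max N₀ 2) (le_max_right _ _) ?_
    intro n hn
    have h2n : 2 ≤ n := le_trans (le_max_right _ _) hn
    have hun := hN₀ n (le_trans (le_max_left _ _) hn)
    have hn0 : (0:ℝ) < n := by exact_mod_cast Nat.pos_of_ne_zero (by omega)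
    have hlogn : 0 < Real.log n := Real.log_pos (by exact_mod_cast h2n)
    have hm1 : (1:ℝ) ≤ Mink F n := by
      exact_mod_cast Stmt18.one_le_mink hne hR0 hR (by omega)
    have hlM : Real.log (Mink F n) < q' * Real.log n := by
      have : Real.log (Mink F n) / Real.log n < q' := hun
      exact (div_lt_iff₀ hlogn).mp this
    have hexp : (Mink F n : ℝ) ≤ (n:ℝ) ^ q' := by
      have h1 : Real.log (Mink F n) ≤ Real.log ((n:ℝ) ^ q') := by
        rw [Real.log_rpow hn0]; linarith
      have h2 := Real.exp_le_exp.mpr h1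
      rwa [Real.exp_log (by linarith), Real.exp_log (Real.rpow_pos_of_pos hn0 q')] at h2
    exact hexp
  have hne_S : S.Nonempty := ⟨d+1, hSgt _ (by linarith)⟩
  have hbdd_S : BddBelow S := ⟨d, fun q hq => hSge q hq⟩
  refine le_antisymm (le_csInf hne_S hSge) ?_
  refine le_of_forall_pos_le_add ?_
  intro η hη
  exact csInf_le hbdd_S (hSgt (d+η) (by linarith))
end
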